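/- arXiv:math/0010039 — 3 statements merged into one kernel-verified Lean document; each statement's English description precedes it below -/
import Mathlib

section
/- If the (A,L)-connection ∇ on M is flat (a left (A,L)-module structure), then the induced right (A,L)-connection on Hom_A(Λ^n_A L, M) given by (φ ∘ α)(x) = φ(λ_α(x)) − ∇_α(φ(x)) is flat, i.e. defines a right (A,L)-module structure: (φ ∘ α) ∘ β − (φ ∘ β) ∘ α = φ ∘ [α,β]. -/
/-! Common setup: Lie-Rinehart algebras, the exterior algebra `Λ_A L`
(realized as `ExteriorAlgebra A L` with its exterior powers `⋀[A]^p L`),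
Gerstenhaber brackets and their generators, left/right `(A,L)`-connections,
Lie derivatives on the top exterior power, covariant derivatives of forms,
and the constant-rank condition. -/

open ExteriorAlgebra

/-- A Lie-Rinehart algebra `(A,L)` over the commutative ring `R`:
`A` is a commutative `R`-algebra, `L` is an `R`-Lie algebra and an `A`-module,
acting on `A` by derivations via the anchor `ρ`, with the usual compatibilities. -/
structure LieRinehart (R A L : Type*) [CommRing R] [CommRing A] [Algebra R A]
    [LieRing L] [Module R L] [Module A L] where
  ρ : L → A → A
  ρ_add_right : ∀ α a b, ρ α (a + b) = ρ α a + ρ α b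
  ρ_leibniz : ∀ α a b, ρ α (a * b) = a * ρ α b + ρ α a * b
  ρ_algebraMap : ∀ α (r : R), ρ α (algebraMap R A r) = 0
  ρ_add_left : ∀ α β a, ρ (α + β) a = ρ α a + ρ β a
  ρ_smul_left : ∀ (a : A) α b, ρ (a • α) b = a * ρ α b
  ρ_bracket : ∀ α β a, ρ ⁅α, β⁆ a = ρ α (ρ β a) - ρ β (ρ α a)
  leibniz : ∀ (a : A) (α β : L), ⁅α, a • β⁆ = a • ⁅α, β⁆ + ρ α a • β

namespace LieRinehart

variable {R A L : Type*} [CommRing R] [CommRing A] [Algebra R A]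
  [LieRing L] [Module R L] [Module A L]
variable (LR : LieRinehart R A L)

/-- The Gerstenhaber bracket on `Λ_A L`: it extends the Lie bracket on `L`
and the action of `L` on `A` (we record the characterizing identities needed). -/
def IsGerstenhaberBracket
    (gb : ExteriorAlgebra A L → ExteriorAlgebra A L → ExteriorAlgebra A L) : Prop :=
  (∀ x y z : ExteriorAlgebra A L, gb (x + y) z = gb x z + gb y z) ∧
  (∀ x y z : ExteriorAlgebra A L, gb x (y + z) = gb x y + gb x z) ∧
  (∀ α β : L, gb (ι A α) (ι A β) = ι A ⁅α, β⁆) ∧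
  (∀ (α : L) (a : A), gb (ι A α) (algebraMap A (ExteriorAlgebra A L) a)
      = algebraMap A (ExteriorAlgebra A L) (LR.ρ α a))

/-- `D` is an `R`-linear operator of degree `-1` on `Λ_A L` generating the
Gerstenhaber bracket `gb`: the deviation of `D` from being a derivation of the
wedge product is the bracket (standard sign convention). -/
def IsGenerator (gb : ExteriorAlgebra A L → ExteriorAlgebra A L → ExteriorAlgebra A L)
    (D : ExteriorAlgebra A L → ExteriorAlgebra A L) : Prop :=
  (∀ x y, D (x + y) = D x + D y) ∧
  (∀ (r : R) (x : ExteriorAlgebra A L), D (algebraMap R A r • x) = algebraMap R A r • D x) ∧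
  (∀ (p : ℕ) (x : ExteriorAlgebra A L), x ∈ ⋀[A]^p L → D x ∈ ⋀[A]^(p-1) L) ∧
  (∀ (p : ℕ) (x y : ExteriorAlgebra A L), x ∈ ⋀[A]^p L →
    gb x y = (-1 : ℤ)^p • (D (x * y) - D x * y - (-1 : ℤ)^p • (x * D y)))

/-- The degree-zero coefficient `Dα ∈ A` of the value of a generator on `α ∈ L`. -/
def DA (D : ExteriorAlgebra A L → ExteriorAlgebra A L) (α : L) : A :=
  algebraMapInv (D (ι A α))

/-- A right `(A,L)`-connection on `A`:  `(a*b) ∘ α = a (b ∘ α) - α(a) b` and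
`a ∘ (b • α) = (a*b) ∘ α`. -/
def IsRightConnA (c : A → L → A) : Prop :=
  (∀ a b α, c (a + b) α = c a α + c b α) ∧
  (∀ a α β, c a (α + β) = c a α + c a β) ∧
  (∀ a b α, c (a * b) α = a * c b α - LR.ρ α a * b) ∧
  (∀ a b α, c a (b • α) = c (a * b) α)

/-- A flat right `(A,L)`-connection on `A`, i.e. a right `(A,L)`-module structure. -/
def IsRightModuleA (c : A → L → A) : Prop :=
  LR.IsRightConnA c ∧ ∀ a α β, c (c a α) β - c (c a β) α = c a ⁅α, β⁆

/-- A (left) `(A,L)`-connection on an `A`-module `M`. -/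
def IsConnection {M : Type*} [AddCommGroup M] [Module A M] (c : L → M → M) : Prop :=
  (∀ α β m, c (α + β) m = c α m + c β m) ∧
  (∀ α m m', c α (m + m') = c α m + c α m') ∧
  (∀ (a : A) α m, c (a • α) m = a • c α m) ∧
  (∀ (a : A) α m, c α (a • m) = a • c α m + LR.ρ α a • m)

/-- A flat (left) `(A,L)`-connection, i.e. a left `(A,L)`-module structure. -/
def IsFlatConnection {M : Type*} [AddCommGroup M] [Module A M] (c : L → M → M) : Prop :=
  LR.IsConnection c ∧ ∀ α β m, c ⁅α, β⁆ m = c α (c β m) - c β (c α m)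

/-- A right `(A,L)`-connection on an `A`-module `N`. -/
def IsRightConnection {N : Type*} [AddCommGroup N] [Module A N] (c : N → L → N) : Prop :=
  (∀ v w α, c (v + w) α = c v α + c w α) ∧
  (∀ v α β, c v (α + β) = c v α + c v β) ∧
  (∀ (a : A) v α, c (a • v) α = a • c v α - LR.ρ α a • v) ∧
  (∀ (a : A) v α, c v (a • α) = c (a • v) α)

/-- A flat right `(A,L)`-connection, i.e. a right `(A,L)`-module structure. -/
def IsRightModule {N : Type*} [AddCommGroup N] [Module A N] (c : N → L → N) : Prop :=
  LR.IsRightConnection c ∧ ∀ v α β, c (c v α) β - c (c v β) α = c v ⁅α, β⁆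

end LieRinehart

section ExtPower

variable {A L : Type*} [CommRing A] [AddCommGroup L] [Module A L]

/-- The decomposable element `ξ₁ ∧ … ∧ ξ_n` of `⋀[A]^n L`. -/
def wMulti (A : Type*) {L : Type*} [CommRing A] [AddCommGroup L] [Module A L]
    (n : ℕ) (ξ : Fin n → L) : ⋀[A]^n L :=
  ⟨ιMulti A n ξ, ιMulti_range A n (Set.mem_range_self ξ)⟩

/-- The wedge pairing `⋀^p ⊗ ⋀^q → ⋀^n` (`p + q = n`). -/
def wedgePair {n p q : ℕ} (h : p + q = n) (α : ⋀[A]^p L) (β : ⋀[A]^q L) : ⋀[A]^n L :=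
  ⟨(α : ExteriorAlgebra A L) * (β : ExteriorAlgebra A L), by
    subst h
    show _ ∈ LinearMap.range (ι A : L →ₗ[A] ExteriorAlgebra A L) ^ (p + q)
    rw [pow_add]
    exact Submodule.mul_mem_mul α.2 β.2⟩

/-- The image `φ_α` of `α ∈ ⋀^p` under the adjoint of the wedge pairing, viewed as the
`q`-form `(ξ₁, …, ξ_q) ↦ α ∧ ξ₁ ∧ … ∧ ξ_q` with values in `⋀^n` (`p + q = n`). -/
def phiForm {n p q : ℕ} (h : p + q = n) (α : ⋀[A]^p L) (ξ : Fin q → L) : ⋀[A]^n L :=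
  wedgePair h α (wMulti A q ξ)

/-- `L` has constant rank `n` over `A`: the localization at every prime of `A`
is (free) of rank `n`. -/
def ConstantRank (A L : Type*) [CommRing A] [AddCommGroup L] [Module A L] (n : ℕ) : Prop :=
  ∀ p : PrimeSpectrum A,
    Module.finrank (Localization p.asIdeal.primeCompl)
      (LocalizedModule p.asIdeal.primeCompl L) = n

end ExtPower

section CovDeriv

variable {A L : Type*} [CommRing A] [LieRing L] [Module A L]

/-- The argument list `([ξ_j,ξ_k], ξ_0, …, ξ̂_j, …, ξ̂_k, …, ξ_q)` obtained from
`ξ : Fin (q+1) → L` by omitting the entries `j < k` and prepending `br`. -/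
def dblOmit {q : ℕ} (ξ : Fin (q + 1) → L) (br : L) (j k : Fin (q + 1)) : Fin q → L :=
  fun i =>
    if h0 : (i : ℕ) = 0 then br
    else
      ξ ⟨if (i : ℕ) - 1 < (j : ℕ) then (i : ℕ) - 1
         else if (i : ℕ) < (k : ℕ) then (i : ℕ) else (i : ℕ) + 1, by
        have h1 := i.isLt
        have h2 := j.isLt
        have h3 := k.isLt
        split_ifs <;> omega⟩

/-- The covariant derivative `d^∇` (Cartan formula) sending an `M`-valued `q`-form on `L`
to a `(q+1)`-form, with respect to the connection-type operation `c`. -/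
def covDeriv {M : Type*} [AddCommGroup M] (c : L → M → M) (q : ℕ)
    (f : (Fin q → L) → M) (ξ : Fin (q + 1) → L) : M :=
  (∑ j : Fin (q + 1), (-1 : ℤ)^(j : ℕ) • c (ξ j) (f (ξ ∘ j.succAbove))) +
    ∑ j : Fin (q + 1), ∑ k : Fin (q + 1),
      if (j : ℕ) < (k : ℕ) then
        (-1 : ℤ)^((j : ℕ) + (k : ℕ)) • f (dblOmit ξ ⁅ξ j, ξ k⁆ j k)
      else 0

end CovDeriv

section LieDeriv

variable {R A L : Type*} [CommRing R] [CommRing A] [Algebra R A]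
  [LieRing L] [Module R L] [Module A L]

/-- `lam` is the Lie derivative of `L` on `⋀[A]^n L`:
`λ_α(ξ₁∧…∧ξ_n) = Σ_j ξ₁∧…∧[α,ξ_j]∧…∧ξ_n`, together with its derivation property. -/
def LieRinehart.IsLieDeriv (LR : LieRinehart R A L) (n : ℕ)
    (lam : L → ⋀[A]^n L → ⋀[A]^n L) : Prop :=
  (∀ α x y, lam α (x + y) = lam α x + lam α y) ∧
  (∀ α (a : A) x, lam α (a • x) = a • lam α x + LR.ρ α a • x) ∧
  (∀ α (ξ : Fin n → L),
    lam α (wMulti A n ξ) = ∑ j : Fin n, wMulti A n (Function.update ξ j ⁅α, ξ j⁆))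

/-- `cTop` is the `(A,L)`-connection on `⋀[A]^n L` induced by the connection `cL` on `L`:
`∇_α(ξ₁∧…∧ξ_n) = Σ_j ξ₁∧…∧∇^L_α(ξ_j)∧…∧ξ_n`. -/
def LieRinehart.IsInducedTop (LR : LieRinehart R A L) (n : ℕ)
    (cL : L → L → L) (cTop : L → ⋀[A]^n L → ⋀[A]^n L) : Prop :=
  LR.IsConnection cTop ∧
  ∀ α (ξ : Fin n → L),
    cTop α (wMulti A n ξ) = ∑ j : Fin n, wMulti A n (Function.update ξ j (cL α (ξ j)))

end LieDeriv

open LieRinehart ExteriorAlgebra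

variable {R A L : Type*} [CommRing R] [CommRing A] [Algebra R A]
  [LieRing L] [Module R L] [Module A L]

section AuxFlat

variable {R A L : Type*} [CommRing R] [CommRing A] [Algebra R A]
  [LieRing L] [Module R L] [Module A L]

/-- Auxiliary: update the `j`-th slot by bracketing with `γ`. -/
private def Fu {n : ℕ} (γ : L) (j : Fin n) (ξ : Fin n → L) : Fin n → L :=
  Function.update ξ j ⁅γ, ξ j⁆

private lemma Fu_comm {n : ℕ} (α β : L) {j k : Fin n} (h : j ≠ k) (ξ : Fin n → L) :
    Fu α k (Fu β j ξ) = Fu β j (Fu α k ξ) := by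
  unfold Fu
  rw [Function.update_of_ne (Ne.symm h), Function.update_of_ne h,
    Function.update_comm h]

private lemma Fu_diag {n : ℕ} (α β : L) (j : Fin n) (ξ : Fin n → L) :
    Fu α j (Fu β j ξ) = Function.update ξ j ⁅α, ⁅β, ξ j⁆⁆ := by
  unfold Fu
  rw [Function.update_self, Function.update_idem]

private lemma wMulti_update_sub {n : ℕ} (ξ : Fin n → L) (j : Fin n) (x y : L) :
    wMulti A n (Function.update ξ j (x - y))
      = wMulti A n (Function.update ξ j x) - wMulti A n (Function.update ξ j y) := by
  apply Subtype.ext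
  exact (ιMulti A n).toMultilinearMap.map_update_sub ξ j x y

private lemma add_helper {G : Type*} [AddCommGroup G] {p1 p2 q1 q2 r1 r2 : G}
    (h1 : p1 - q1 - r1 = 0) (h2 : p2 - q2 - r2 = 0) :
    (p1 + p2) - (q1 + q2) - (r1 + r2) = 0 := by
  rw [show (p1 + p2) - (q1 + q2) - (r1 + r2) = (p1 - q1 - r1) + (p2 - q2 - r2) by abel,
    h1, h2, add_zero]

/-- Flatness of the Lie derivative on the top exterior power. -/
private lemma lam_flat (LR : LieRinehart R A L) (n : ℕ)
    (lam : L → ⋀[A]^n L → ⋀[A]^n L) (hlam : LR.IsLieDeriv n lam)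
    (α β : L) (x : ⋀[A]^n L) :
    lam α (lam β x) - lam β (lam α x) = lam ⁅α, β⁆ x := by
  obtain ⟨hadd, hsmul, hgen⟩ := hlam
  have hlam0 : ∀ γ : L, lam γ 0 = 0 := by
    intro γ
    have h := hadd γ 0 0
    rw [add_zero] at h
    exact right_eq_add.mp h
  have hsum : ∀ (γ : L) (s : Finset (Fin n)) (f : Fin n → ⋀[A]^n L),
      lam γ (∑ j ∈ s, f j) = ∑ j ∈ s, lam γ (f j) :=
    fun γ s f => map_sum (AddMonoidHom.mk' (lam γ) (hadd γ)) f s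
  -- the key identity on decomposables
  have key : ∀ ξ : Fin n → L,
      lam α (lam β (wMulti A n ξ)) - lam β (lam α (wMulti A n ξ))
        - lam ⁅α, β⁆ (wMulti A n ξ) = 0 := by
    intro ξ
    have e1 : ∀ γ δ : L, lam γ (lam δ (wMulti A n ξ))
        = ∑ j : Fin n, ∑ k : Fin n, wMulti A n (Fu γ k (Fu δ j ξ)) := by
      intro γ δ
      rw [show lam δ (wMulti A n ξ) = ∑ j : Fin n, wMulti A n (Fu δ j ξ) from hgen δ ξ,
        hsum]
      exact Finset.sum_congr rfl fun j _ => hgen γ (Fu δ j ξ)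
    rw [e1 α β, e1 β α,
      show lam ⁅α, β⁆ (wMulti A n ξ)
        = ∑ j : Fin n, wMulti A n (Function.update ξ j ⁅⁅α, β⁆, ξ j⁆) from hgen _ ξ,
      show (∑ j : Fin n, ∑ k : Fin n, wMulti A n (Fu β k (Fu α j ξ)))
        = ∑ j : Fin n, ∑ k : Fin n, wMulti A n (Fu β j (Fu α k ξ)) from Finset.sum_comm,
      sub_eq_zero, ← Finset.sum_sub_distrib]
    refine Finset.sum_congr rfl fun j _ => ?_
    rw [← Finset.sum_sub_distrib, Finset.sum_eq_single j]
    · rw [Fu_diag α β j ξ, Fu_diag β α j ξ, ← wMulti_update_sub, ← lie_lie]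
    · intro k _ hk
      rw [Fu_comm α β (Ne.symm hk) ξ, sub_self]
    · intro h; exact absurd (Finset.mem_univ j) h
  suffices h : ∀ z : ⋀[A]^n L,
      lam α (lam β z) - lam β (lam α z) - lam ⁅α, β⁆ z = 0 by
    exact sub_eq_zero.mp (h x)
  intro z
  obtain ⟨x, hx⟩ := z
  have hx' : x ∈ Submodule.span A (Set.range (ιMulti A n (M := L))) := by
    rw [ιMulti_span_fixedDegree]; exact hx
  revert hx
  induction hx' using Submodule.span_induction with
  | mem y hy =>
    obtain ⟨ξ, rfl⟩ := hy
    intro hx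
    exact key ξ
  | zero =>
    intro hx
    show lam α (lam β (0 : ⋀[A]^n L)) - lam β (lam α 0) - lam ⁅α, β⁆ 0 = 0
    simp only [hlam0, sub_zero, sub_self]
  | add y z hy hz ihy ihz =>
    intro hx
    have hy' : y ∈ ⋀[A]^n L := by rw [← ιMulti_span_fixedDegree]; exact hy
    have hz' : z ∈ ⋀[A]^n L := by rw [← ιMulti_span_fixedDegree]; exact hz
    show lam α (lam β ((⟨y, hy'⟩ : ⋀[A]^n L) + ⟨z, hz'⟩))
        - lam β (lam α ((⟨y, hy'⟩ : ⋀[A]^n L) + ⟨z, hz'⟩))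
        - lam ⁅α, β⁆ ((⟨y, hy'⟩ : ⋀[A]^n L) + ⟨z, hz'⟩) = 0
    simp only [hadd]
    exact add_helper (ihy hy') (ihz hz')
  | smul a y hy ihy =>
    intro hx
    have hy' : y ∈ ⋀[A]^n L := by rw [← ιMulti_span_fixedDegree]; exact hy
    show lam α (lam β (a • (⟨y, hy'⟩ : ⋀[A]^n L)))
        - lam β (lam α (a • (⟨y, hy'⟩ : ⋀[A]^n L)))
        - lam ⁅α, β⁆ (a • (⟨y, hy'⟩ : ⋀[A]^n L)) = 0
    have hlamY : lam ⁅α, β⁆ (⟨y, hy'⟩ : ⋀[A]^n L)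
        = lam α (lam β ⟨y, hy'⟩) - lam β (lam α ⟨y, hy'⟩) :=
      (sub_eq_zero.mp (ihy hy')).symm
    simp only [hsmul, hadd]
    rw [hlamY, smul_sub, LR.ρ_bracket α β a,
      sub_smul (LR.ρ α (LR.ρ β a)) (LR.ρ β (LR.ρ α a)) (⟨y, hy'⟩ : ⋀[A]^n L)]
    abel

end AuxFlat

/-- if the `(A,L)`-connection `∇` on `M` is flat, then the induced right
`(A,L)`-connection `(φ ∘ α)(x) = φ(λ_α(x)) − ∇_α(φ(x))` on `Hom_A(⋀^n L, M)` is flat: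
`(φ ∘ α) ∘ β − (φ ∘ β) ∘ α = φ ∘ [α,β]`. -/
theorem hom_right_connection_flat (LR : LieRinehart R A L)
    (n : ℕ) [Module.Finite A L] [Module.Projective A L] (hrank : ConstantRank A L n)
    {M : Type*} [AddCommGroup M] [Module A M]
    (cM : L → M → M) (hcM : LR.IsFlatConnection cM)
    (lam : L → ⋀[A]^n L → ⋀[A]^n L) (hlam : LR.IsLieDeriv n lam)
    (cHom : ((⋀[A]^n L) →ₗ[A] M) → L → ((⋀[A]^n L) →ₗ[A] M))
    (hdef : ∀ φ α (x : ⋀[A]^n L), cHom φ α x = φ (lam α x) - cM α (φ x)) :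
    ∀ φ α β, cHom (cHom φ α) β - cHom (cHom φ β) α = cHom φ ⁅α, β⁆ := by
  intro φ α β
  have csub : ∀ (γ : L) (m m' : M), cM γ (m - m') = cM γ m - cM γ m' :=
    fun γ m m' => (AddMonoidHom.mk' (cM γ) (hcM.1.2.1 γ)).map_sub m m'
  refine LinearMap.ext fun x => ?_
  simp only [LinearMap.sub_apply, hdef]
  rw [csub, csub, ← lam_flat LR n lam hlam α β x, map_sub φ, hcM.2 α β (φ x)]
  abel
end

section
/- Let D be a generator of the Gerstenhaber bracket on Λ_A L corresponding to the (A,L)-connection ∇ on Λ^n_A L, with L finitely generated projective of constant rank n. For α ∈ Λ^p_A L and β ∈ Λ^{n−p}_A L, one has d^∇φ_α(β) = (−1)^p α ∧ (Dβ) + (−1)^p [α, β], where [ , ] is the Gerstenhaber bracket. -/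
/-! Common setup: Lie-Rinehart algebras, the exterior algebra `Λ_A L`
(realized as `ExteriorAlgebra A L` with its exterior powers `⋀[A]^p L`),
Gerstenhaber brackets and their generators, left/right `(A,L)`-connections,
Lie derivatives on the top exterior power, covariant derivatives of forms,
and the constant-rank condition. -/

open ExteriorAlgebra

open LieRinehart ExteriorAlgebra

variable {R A L : Type*} [CommRing R] [CommRing A] [Algebra R A]
  [LieRing L] [Module R L] [Module A L]

/-- The relation `φ_{D α} = - d^∇ (φ_α)` between a degree `-1` operator `D` on `Λ_A L`
and a connection-type operation `cTop` on `⋀[A]^n L`, expressed on all exterior degrees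
(with `Λ^{-1} = 0` for `p = 0`). -/
def GenConnRel (LR : LieRinehart R A L) (n : ℕ)
    (D : ExteriorAlgebra A L → ExteriorAlgebra A L)
    (cTop : L → ⋀[A]^n L → ⋀[A]^n L) : Prop :=
  (∀ (p m : ℕ) (h : p + 1 + m = n) (α : ⋀[A]^(p+1) L)
      (hD : D (α : ExteriorAlgebra A L) ∈ ⋀[A]^p L) (ξ : Fin (m+1) → L),
      phiForm (show p + (m+1) = n by omega) ⟨D (α : ExteriorAlgebra A L), hD⟩ ξ
        = - covDeriv cTop m (phiForm h α) ξ) ∧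
  (∀ (m : ℕ) (h : 0 + m = n) (α : ⋀[A]^0 L) (ξ : Fin (m+1) → L),
      covDeriv cTop m (phiForm h α) ξ = 0)


section Aux

/-- An alternating map in `k` variables vanishes on families contained in the span of
fewer than `k` vectors. -/
theorem alternating_eq_zero_of_span {R M N : Type*} [CommSemiring R] [AddCommMonoid M]
    [Module R M] [AddCommMonoid N] [Module R N] {k n : ℕ} (hn : n < k)
    (f : M [⋀^Fin k]→ₗ[R] N) (b : Fin n → M) (v : Fin k → M)
    (hv : ∀ i, v i ∈ Submodule.span R (Set.range b)) : f v = 0 := by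
  choose c hc using fun i => (Submodule.mem_span_range_iff_exists_fun R).mp (hv i)
  have hv' : v = fun i => ∑ j, c i j • b j := funext fun i => (hc i).symm
  rw [hv']
  have : f.toMultilinearMap (fun i => ∑ j, c i j • b j)
      = ∑ σ : Fin k → Fin n, f.toMultilinearMap (fun i => c i (σ i) • b (σ i)) := by
    exact f.toMultilinearMap.map_sum (fun i j => c i j • b j)
  show f.toMultilinearMap (fun i => ∑ j, c i j • b j) = 0
  rw [this]
  refine Finset.sum_eq_zero fun σ _ => ?_
  have hσ : ¬ Function.Injective σ := by
    intro hinj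
    have := Fintype.card_le_of_injective σ hinj
    simp only [Fintype.card_fin] at this
    omega
  obtain ⟨i, j, hij, hne⟩ : ∃ i j, σ i = σ j ∧ i ≠ j := by
    simp only [Function.Injective, not_forall] at hσ
    obtain ⟨i, j, h1, h2⟩ := hσ
    exact ⟨i, j, h1, h2⟩
  have h1 : f.toMultilinearMap (fun i => c i (σ i) • (fun t => b (σ t)) i)
      = (∏ i, c i (σ i)) • f.toMultilinearMap (fun t => b (σ t)) :=
    f.toMultilinearMap.map_smul_univ (fun i => c i (σ i)) (fun t => b (σ t))
  have h2 : f (fun t => b (σ t)) = 0 :=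
    f.map_eq_zero_of_eq (fun t => b (σ t)) (congrArg b hij) hne
  calc f.toMultilinearMap (fun i => c i (σ i) • b (σ i))
      = (∏ i, c i (σ i)) • f.toMultilinearMap (fun t => b (σ t)) := h1
    _ = 0 := by rw [show f.toMultilinearMap (fun t => b (σ t)) = f (fun t => b (σ t)) from rfl,
        h2, smul_zero]

theorem LocalizedModule.mk_list_prod'' {R A' : Type*} [CommSemiring R] [Semiring A']
    [Algebra R A'] (S : Submonoid R) (l : List A') :
    (LocalizedModule.mk l.prod (1 : S)) = (l.map fun a => LocalizedModule.mk a (1 : S)).prod := by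
  induction l with
  | nil =>
    simp only [List.prod_nil, List.map_nil]
    exact (LocalizedModule.numeratorRingHom (S := S) (A := A')).map_one
  | cons a l ih =>
    rw [List.prod_cons, List.map_cons, List.prod_cons, ← ih, LocalizedModule.mk_mul_mk, one_mul]

/-- For `L` finite projective of constant rank `n`, any wedge of `n+1` vectors vanishes. -/
theorem iotaMulti_succ_eq_zero {A L : Type*} [CommRing A] [AddCommGroup L] [Module A L]
    (n : ℕ) [Module.Finite A L] [Module.Projective A L] (hrank : ConstantRank A L n)
    (ξ : Fin (n+1) → L) : ιMulti A (n+1) ξ = 0 := by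
  haveI hfp : Module.FinitePresentation A L := Module.finitePresentation_of_projective A L
  apply Module.eq_zero_of_localization_maximal (R := A) (M := ExteriorAlgebra A L)
    (Mₚ := fun P _ => LocalizedModule P.primeCompl (ExteriorAlgebra A L))
    (f := fun P _ => LocalizedModule.mkLinearMap P.primeCompl (ExteriorAlgebra A L))
  intro P hP
  set S := P.primeCompl with hS
  haveI : Module.Finite (Localization S) (LocalizedModule S L) :=
    Module.Finite.of_isLocalizedModule S (LocalizedModule.mkLinearMap S L)
  haveI hfree : Module.Free (Localization S) (LocalizedModule S L) := by
    have := Module.freeLocus_eq_univ (R := A) (M := L)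
    have hmem : (⟨P, hP.isPrime⟩ : PrimeSpectrum A) ∈ Module.freeLocus A L := by
      rw [this]; trivial
    exact Module.mem_freeLocus.mp hmem
  have hcard : Fintype.card (Module.Free.ChooseBasisIndex (Localization S)
      (LocalizedModule S L)) = n := by
    rw [← Module.finrank_eq_card_chooseBasisIndex]
    exact hrank ⟨P, hP.isPrime⟩
  let b : Module.Basis (Fin n) (Localization S) (LocalizedModule S L) :=
    (Module.Free.chooseBasis (Localization S) (LocalizedModule S L)).reindex
      (Fintype.equivFinOfCardEq hcard)
  -- the localized inclusion of `L` into the localized exterior algebra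
  let jlin : LocalizedModule S L →ₗ[Localization S] LocalizedModule S (ExteriorAlgebra A L) :=
    LocalizedModule.map S (ι A (M := L))
  have hsq : ∀ x, jlin x * jlin x = 0 := by
    intro x
    induction x using LocalizedModule.induction_on with
    | h x s =>
      show LocalizedModule.map S (ι A (M := L)) (LocalizedModule.mk x s) * _ = 0
      rw [LocalizedModule.map_mk, LocalizedModule.mk_mul_mk, ι_sq_zero,
        LocalizedModule.zero_mk]
  letI : Algebra (Localization S) (LocalizedModule S (ExteriorAlgebra A L)) :=
    Algebra.ofModule
      (fun x p q => by
        induction x using Localization.induction_on with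
        | H x =>
          induction p, q using LocalizedModule.induction_on₂ with
          | _ a s b t =>
            rw [LocalizedModule.mk_smul_mk, LocalizedModule.mk_mul_mk,
              LocalizedModule.mk_mul_mk, LocalizedModule.mk_smul_mk, smul_mul_assoc, mul_assoc])
      (fun x p q => by
        induction x using Localization.induction_on with
        | H x =>
          induction p, q using LocalizedModule.induction_on₂ with
          | _ a s b t =>
            rw [LocalizedModule.mk_smul_mk, LocalizedModule.mk_mul_mk,
              LocalizedModule.mk_mul_mk, LocalizedModule.mk_smul_mk, mul_smul_comm,
              mul_left_comm b x.2 t])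
  let ψ : ExteriorAlgebra (Localization S) (LocalizedModule S L)
      →ₐ[Localization S] LocalizedModule S (ExteriorAlgebra A L) :=
    ExteriorAlgebra.lift (Localization S) ⟨jlin, hsq⟩
  have hzero : ιMulti (Localization S) (n+1) (fun i => LocalizedModule.mk (ξ i) 1) = 0 :=
    alternating_eq_zero_of_span (Nat.lt_succ_self n) _ b _ (fun i => b.mem_span _)
  have key : LocalizedModule.mk (ιMulti A (n+1) ξ) (1 : S)
      = ψ (ιMulti (Localization S) (n+1) (fun i => LocalizedModule.mk (ξ i) 1)) := by
    rw [ιMulti_apply, ιMulti_apply, map_list_prod, List.map_ofFn,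
      LocalizedModule.mk_list_prod'' S, List.map_ofFn]
    refine congrArg (fun l : Fin (n+1) → LocalizedModule S (ExteriorAlgebra A L) => (List.ofFn l).prod) (funext fun i => ?_)
    show LocalizedModule.mk (ι A (ξ i)) 1
        = ψ (ι (Localization S) (LocalizedModule.mk (ξ i) 1))
    rw [show ψ (ι (Localization S) (LocalizedModule.mk (ξ i) 1))
        = jlin (LocalizedModule.mk (ξ i) 1) from
      ExteriorAlgebra.lift_ι_apply (R := Localization S) jlin hsq _]
    show _ = LocalizedModule.map S (ι A (M := L)) (LocalizedModule.mk (ξ i) 1)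
    rw [LocalizedModule.map_mk]
  show LocalizedModule.mk (ιMulti A (n+1) ξ) (1 : S) = 0
  rw [key, hzero, map_zero]

/-- Every element of `⋀^{n+1} L` vanishes. -/
theorem exteriorPower_succ_eq_zero {A L : Type*} [CommRing A] [AddCommGroup L] [Module A L]
    (n : ℕ) [Module.Finite A L] [Module.Projective A L] (hrank : ConstantRank A L n)
    (x : ExteriorAlgebra A L) (hx : x ∈ ⋀[A]^(n+1) L) : x = 0 := by
  rw [← ιMulti_span_fixedDegree] at hx
  have hle : Submodule.span A (Set.range (ιMulti A (n+1) (M := L))) ≤ ⊥ := by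
    rw [Submodule.span_le]
    rintro _ ⟨ζ, rfl⟩
    simp [iotaMulti_succ_eq_zero n hrank ζ]
  simpa using hle hx

end Aux

/-- Remark 1.9: for `α ∈ ⋀^p L` and `β = ξ_1∧…∧ξ_{n−p+1}`,
`d^∇φ_α(β) = (−1)^p α ∧ (Dβ) + (−1)^p [α, β]`, where `[ , ]` is the Gerstenhaber
bracket and `∇` corresponds to `D` via `φ_{Dα} = −d^∇φ_α`. -/
theorem covDeriv_phi_eq_wedge_generator_add_bracket (LR : LieRinehart R A L)
    (n : ℕ) [Module.Finite A L] [Module.Projective A L] (hrank : ConstantRank A L n)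
    (gb : ExteriorAlgebra A L → ExteriorAlgebra A L → ExteriorAlgebra A L)
    (hgb : LR.IsGerstenhaberBracket gb)
    (D : ExteriorAlgebra A L → ExteriorAlgebra A L) (hD : IsGenerator (R := R) gb D)
    (cTop : L → ⋀[A]^n L → ⋀[A]^n L) (hcTop : LR.IsConnection cTop)
    (hRel : GenConnRel LR n D cTop)
    (p m : ℕ) (h : p + m = n) (α : ⋀[A]^p L) (ξ : Fin (m+1) → L) :
    ((covDeriv cTop m (phiForm h α) ξ : ⋀[A]^n L) : ExteriorAlgebra A L)
      = (-1 : ℤ)^p • ((α : ExteriorAlgebra A L) * D (ιMulti A (m+1) ξ))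
        + (-1 : ℤ)^p • gb (α : ExteriorAlgebra A L) (ιMulti A (m+1) ξ) := by
  have hD0 : D 0 = 0 := by
    have h0 := hD.1 0 0
    rw [add_zero] at h0
    exact left_eq_add.mp h0
  have hgb0 : gb (α : ExteriorAlgebra A L) 0 = 0 := by
    have h0 := hgb.2.1 (α : ExteriorAlgebra A L) 0 0
    rw [add_zero] at h0
    exact left_eq_add.mp h0
  rcases p with _ | p'
  · -- `p = 0` case
    obtain rfl : m = n := by omega
    have hβ : ιMulti A (m+1) ξ = 0 := iotaMulti_succ_eq_zero m hrank ξ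
    rw [hRel.2 m h α ξ, hβ, hD0, mul_zero, hgb0]
    simp
  · -- `p = p' + 1` case
    set β : ExteriorAlgebra A L := ιMulti A (m+1) ξ with hβdef
    have hβmem : β ∈ ⋀[A]^(m+1) L := ιMulti_range A (m+1) (Set.mem_range_self ξ)
    have hprod : (α : ExteriorAlgebra A L) * β = 0 := by
      apply exteriorPower_succ_eq_zero n hrank
      have hmem : (α : ExteriorAlgebra A L) * β
          ∈ LinearMap.range (ι A : L →ₗ[A] ExteriorAlgebra A L) ^ (p' + 1 + (m + 1)) := by
        rw [pow_add]
        exact Submodule.mul_mem_mul α.2 hβmem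
      have he : p' + 1 + (m + 1) = n + 1 := by omega
      rw [he] at hmem
      exact hmem
    have hDprod : D ((α : ExteriorAlgebra A L) * β) = 0 := by rw [hprod, hD0]
    have hDα : D (α : ExteriorAlgebra A L) ∈ ⋀[A]^p' L :=
      hD.2.2.1 (p' + 1) (α : ExteriorAlgebra A L) α.2
    have hrel := hRel.1 p' m h α hDα ξ
    have hcov : ((covDeriv cTop m (phiForm h α) ξ : ⋀[A]^n L) : ExteriorAlgebra A L)
        = -(D (α : ExteriorAlgebra A L) * β) := by
      have h2 := congrArg (fun x : ⋀[A]^n L => (x : ExteriorAlgebra A L)) hrel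
      simp only [Submodule.coe_neg] at h2
      have h3 : D (α : ExteriorAlgebra A L) * β
          = -((covDeriv cTop m (phiForm h α) ξ : ⋀[A]^n L) : ExteriorAlgebra A L) := h2
      rw [h3, neg_neg]
    rw [hcov]
    have hgbeq := hD.2.2.2 (p' + 1) (α : ExteriorAlgebra A L) β α.2
    rw [hgbeq, hDprod]
    have hsign : ((-1 : ℤ) ^ (p' + 1)) * ((-1 : ℤ) ^ (p' + 1)) = 1 := by
      rw [← pow_add]
      exact Even.neg_one_pow ⟨p' + 1, rfl⟩
    rw [smul_smul, hsign, one_smul]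
    generalize (-1 : ℤ) ^ (p' + 1) = c
    generalize (α : ExteriorAlgebra A L) * D β = u
    generalize D (α : ExteriorAlgebra A L) * β = w
    abel
end

section
/- Suppose L is a finitely generated free A-module of rank n. Given any (A,L)-connection ∇̄ on Λ^n_A L and any torsion-free (A,L)-connection ∇^L on L inducing the connection ∇ on Λ^n_A L, write ∇̄_α(x) = ∇_α(x) + φ(α)x for an A-linear map φ : L → A. Then there exists an A-linear map Φ : L → End_A(L) with Tr(Φ(α)) = φ(α) and Φ(α)β = Φ(β)α for all α, β ∈ L, and the connection ∇̄^L_α = ∇^L_α + Φ(α) on L is torsion-free and induces ∇̄ on Λ^n_A L. -/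
/-! Common setup: Lie-Rinehart algebras, the exterior algebra `Λ_A L`
(realized as `ExteriorAlgebra A L` with its exterior powers `⋀[A]^p L`),
Gerstenhaber brackets and their generators, left/right `(A,L)`-connections,
Lie derivatives on the top exterior power, covariant derivatives of forms,
and the constant-rank condition. -/

open ExteriorAlgebra

open LieRinehart ExteriorAlgebra

variable {R A L : Type*} [CommRing R] [CommRing A] [Algebra R A]
  [LieRing L] [Module R L] [Module A L]


section AuxTrace

open Function

theorem alt_sum_update_trace {A L M : Type*} [CommRing A] [AddCommGroup L] [Module A L]
    [AddCommGroup M] [Module A M] {n : ℕ} (b : Module.Basis (Fin n) A L)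
    (ω : L [⋀^Fin n]→ₗ[A] M) (T : L →ₗ[A] L) (ξ : Fin n → L) :
    ∑ j : Fin n, ω (Function.update ξ j (T (ξ j))) = LinearMap.trace A L T • ω ξ := by
  classical
  have htr : LinearMap.trace A L T = ∑ i, b.repr (T (b i)) i := by
    rw [LinearMap.trace_eq_matrix_trace A b T, Matrix.trace]
    simp [Matrix.diag, LinearMap.toMatrix_apply]
  let F : MultilinearMap A (fun _ : Fin n => L) M :=
    ∑ j : Fin n, ω.toMultilinearMap.compLinearMap (fun i => if i = j then T else LinearMap.id)
  have hF : ∀ ζ : Fin n → L, F ζ = ∑ j : Fin n, ω (Function.update ζ j (T (ζ j))) := by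
    intro ζ
    simp only [F, MultilinearMap.sum_apply, MultilinearMap.compLinearMap_apply]
    refine Finset.sum_congr rfl fun j _ => ?_
    show ω.toMultilinearMap _ = ω.toMultilinearMap _
    congr 1
    funext i
    by_cases h : i = j
    · subst h; simp
    · simp [h, Function.update_of_ne h]
  have halt : ∀ (ζ : Fin n → L) (i k : Fin n), ζ i = ζ k → i ≠ k → F ζ = 0 := by
    intro ζ i k hik hne
    rw [hF]
    have hz : ∀ j ∈ (Finset.univ : Finset (Fin n)), j ∉ ({i, k} : Finset (Fin n)) →
        ω (update ζ j (T (ζ j))) = 0 := by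
      intro j _ hj
      simp only [Finset.mem_insert, Finset.mem_singleton, not_or] at hj
      refine ω.map_eq_zero_of_eq _ (i := i) (j := k) ?_ hne
      rw [update_of_ne (Ne.symm hj.1), update_of_ne (Ne.symm hj.2)]
      exact hik
    rw [← Finset.sum_subset (Finset.subset_univ ({i, k} : Finset (Fin n))) hz,
      Finset.sum_pair hne]
    have hupd : update ζ k (T (ζ k)) = (update ζ i (T (ζ i))) ∘ Equiv.swap i k := by
      funext m
      show update ζ k (T (ζ k)) m = update ζ i (T (ζ i)) (Equiv.swap i k m)
      rcases eq_or_ne m i with rfl | hmi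
      · rw [update_of_ne hne, Equiv.swap_apply_left, update_of_ne (Ne.symm hne)]
        exact hik
      · rcases eq_or_ne m k with rfl | hmk
        · rw [update_self, Equiv.swap_apply_right, update_self, hik]
        · rw [update_of_ne hmk, Equiv.swap_apply_of_ne_of_ne hmi hmk, update_of_ne hmi]
    rw [hupd, ω.map_swap _ hne]
    abel
  let Falt : L [⋀^Fin n]→ₗ[A] M := { toMultilinearMap := F, map_eq_zero_of_eq' := halt }
  have key : Falt = LinearMap.trace A L T • ω := by
    refine Module.Basis.ext_alternating b fun v hv => ?_
    have hbij : Function.Bijective v := (Finite.injective_iff_bijective).1 hv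
    let σ : Equiv.Perm (Fin n) := Equiv.ofBijective v hbij
    have hσ : ∀ j, σ j = v j := fun j => rfl
    show F (fun i => b (v i)) = LinearMap.trace A L T • ω (fun i => b (v i))
    rw [hF]
    have hterm : ∀ j : Fin n,
        ω (update (fun i => b (v i)) j (T (b (v j))))
          = b.repr (T (b (v j))) (v j) • ω (fun i => b (v i)) := by
      intro j
      conv_lhs => rw [← b.sum_repr (T (b (v j)))]
      rw [ω.map_update_sum]
      rw [Finset.sum_eq_single (v j)]
      · rw [ω.map_update_smul]
        congr 1
        have : update (fun i => b (v i)) j (b (v j)) = fun i => b (v i) := by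
          have := Function.update_eq_self j (fun i => b (v i))
          exact this
        rw [this]
      · intro i _ hij
        rw [ω.map_update_smul]
        have hvs : v (σ.symm i) = i := by rw [← hσ]; exact σ.apply_symm_apply i
        have hjne : j ≠ σ.symm i := by
          intro h
          apply hij
          rw [← h] at hvs
          exact hvs.symm
        have hz : ω (update (fun i' => b (v i')) j (b i)) = 0 := by
          refine ω.map_eq_zero_of_eq _ (i := j) (j := σ.symm i) ?_ hjne
          rw [update_self, update_of_ne (Ne.symm hjne)]
          rw [hvs]
        rw [hz, smul_zero]
      · intro h; exact absurd (Finset.mem_univ _) h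
    rw [Finset.sum_congr rfl fun j _ => hterm j, ← Finset.sum_smul]
    congr 1
    rw [htr]
    exact Equiv.sum_comp σ (fun i => b.repr (T (b i)) i)
  have := congrArg (fun f : L [⋀^Fin n]→ₗ[A] M => f ξ) key
  simp only [AlternatingMap.smul_apply] at this
  rw [← hF ξ]
  exact this

lemma wMulti_coe' {A L : Type*} [CommRing A] [AddCommGroup L] [Module A L] {n : ℕ}
    (ξ : Fin n → L) :
    ((wMulti A n ξ : ⋀[A]^n L) : ExteriorAlgebra A L) = ExteriorAlgebra.ιMulti A n ξ := rfl

end AuxTrace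

/-- for `L` free of rank `n`, given a connection `∇̄` on `⋀^n L`, a
torsion-free connection `∇^L` on `L` inducing `∇` on `⋀^n L`, and
`∇̄_α(x) = ∇_α(x) + φ(α)x`, there exists an `A`-linear `Φ : L → End_A(L)` with
`Tr(Φ(α)) = φ(α)` and `Φ(α)β = Φ(β)α`, such that `∇̄^L = ∇^L + Φ` is torsion-free and
induces `∇̄` on `⋀^n L`. -/
theorem exists_symmetric_Phi_torsionFree_inducing (LR : LieRinehart R A L)
    (n : ℕ) [Module.Free A L] [Module.Finite A L] (hrank : Module.finrank A L = n)
    (cbar : L → ⋀[A]^n L → ⋀[A]^n L) (hcbar : LR.IsConnection cbar)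
    (cL : L → L → L) (hcL : LR.IsConnection cL)
    (htf : ∀ α β, cL α β - cL β α = ⁅α, β⁆)
    (cTop : L → ⋀[A]^n L → ⋀[A]^n L) (hind : LR.IsInducedTop n cL cTop)
    (φ : L →ₗ[A] A) (hφ : ∀ α (x : ⋀[A]^n L), cbar α x = cTop α x + φ α • x) :
    ∃ Phi : L →ₗ[A] (L →ₗ[A] L),
      (∀ α, LinearMap.trace A L (Phi α) = φ α) ∧
      (∀ α β, Phi α β = Phi β α) ∧
      (∀ α β, (cL α β + Phi α β) - (cL β α + Phi β α) = ⁅α, β⁆) ∧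
      (∀ α (ξ : Fin n → L),
        cbar α (wMulti A n ξ)
          = ∑ j : Fin n, wMulti A n (Function.update ξ j (cL α (ξ j) + Phi α (ξ j)))) := by
    classical
  rcases subsingleton_or_nontrivial A with hA | hA
  · haveI : Subsingleton (ExteriorAlgebra A L) := Module.subsingleton A _
    haveI : Subsingleton (⋀[A]^n L) := ⟨fun x y => Subtype.ext (Subsingleton.elim _ _)⟩
    refine ⟨0, fun α => Subsingleton.elim _ _, fun α β => by simp, ?_, ?_⟩
    · intro α β
      simp only [LinearMap.zero_apply, add_zero]
      exact htf α β
    · intro α ξ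
      exact Subsingleton.elim _ _
  have hcard : Fintype.card (Module.Free.ChooseBasisIndex A L) = n := by
    rw [← Module.finrank_eq_card_chooseBasisIndex, hrank]
  let b : Module.Basis (Fin n) A L :=
    (Module.Free.chooseBasis A L).reindex (Fintype.equivFinOfCardEq hcard)
  rcases Nat.eq_zero_or_pos n with hn | hn
  · subst hn
    haveI : Subsingleton L := b.repr.toEquiv.subsingleton
    refine ⟨0, ?_, ?_, ?_, ?_⟩
    · intro α
      have hα : α = (0 : L) := Subsingleton.elim _ _
      simp [hα]
    · intro α β; simp
    · intro α β
      simp only [LinearMap.zero_apply, add_zero]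
      exact htf α β
    · intro α ξ
      have hα : α = (0 : L) := Subsingleton.elim _ _
      rw [hφ, hind.2 α ξ]
      simp [hα]
  · set i0 : Fin n := ⟨0, hn⟩ with hi0
    set e : L := b i0 with he
    set ε : L →ₗ[A] A := b.coord i0 with hε
    have hεe : ε e = 1 := by
      simp [hε, he, Module.Basis.coord_apply, Module.Basis.repr_self]
    let Phi : L →ₗ[A] L →ₗ[A] L := LinearMap.mk₂ A
      (fun α β => (φ α * ε β + φ β * ε α - φ e * ε α * ε β) • e)
      (fun α α' β => by
        simp only [map_add]
        rw [← add_smul]; congr 1; ring)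
      (fun a α β => by
        simp only [map_smul, smul_eq_mul, smul_smul]
        congr 1; ring)
      (fun α β β' => by
        simp only [map_add]
        rw [← add_smul]; congr 1; ring)
      (fun a α β => by
        simp only [map_smul, smul_eq_mul, smul_smul]
        congr 1; ring)
    have hPhi_apply : ∀ α β : L,
        Phi α β = (φ α * ε β + φ β * ε α - φ e * ε α * ε β) • e := fun α β => rfl
    have htr0 : ∀ (T : L →ₗ[A] L),
        LinearMap.trace A L T = ∑ i, b.repr (T (b i)) i := by
      intro T
      rw [LinearMap.trace_eq_matrix_trace A b T, Matrix.trace]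
      simp [Matrix.diag, LinearMap.toMatrix_apply]
    have htrace : ∀ α : L, LinearMap.trace A L (Phi α) = φ α := by
      intro α
      rw [htr0]
      have : ∀ i : Fin n, b.repr (Phi α (b i)) i
          = (φ α * ε (b i) + φ (b i) * ε α - φ e * ε α * ε (b i)) *
              (if i0 = i then (1 : A) else 0) := by
        intro i
        rw [hPhi_apply, map_smul, Finsupp.smul_apply, smul_eq_mul]
        congr 1
        rw [he, Module.Basis.repr_self, Finsupp.single_apply]
      rw [Finset.sum_congr rfl fun i _ => this i]
      simp only [mul_ite, mul_one, mul_zero]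
      rw [Finset.sum_ite_eq]
      simp only [Finset.mem_univ, if_true]
      rw [← he, hεe]
      ring
    have hsym : ∀ α β : L, Phi α β = Phi β α := by
      intro α β
      rw [hPhi_apply, hPhi_apply]
      congr 1; ring
    refine ⟨Phi, htrace, hsym, ?_, ?_⟩
    · intro α β
      rw [hsym α β, add_sub_add_right_eq_sub]
      exact htf α β
    · intro α ξ
      rw [hφ, hind.2 α ξ]
      have hsum := alt_sum_update_trace b (ExteriorAlgebra.ιMulti A n) (Phi α) ξ
      rw [htrace α] at hsum
      refine Subtype.ext ?_
      simp only [AddSubmonoidClass.coe_finset_sum, Submodule.coe_add, Submodule.coe_smul,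
        wMulti_coe']
      have hsplit : ∀ j : Fin n,
          ExteriorAlgebra.ιMulti A n (Function.update ξ j (cL α (ξ j) + Phi α (ξ j)))
            = ExteriorAlgebra.ιMulti A n (Function.update ξ j (cL α (ξ j)))
              + ExteriorAlgebra.ιMulti A n (Function.update ξ j (Phi α (ξ j))) :=
        fun j => (ExteriorAlgebra.ιMulti A n).map_update_add ξ j _ _
      rw [Finset.sum_congr rfl fun j _ => hsplit j, Finset.sum_add_distrib, hsum]
end
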